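/- (Four-cycle reciprocity) For any finite additive abelian group F with f = |F| and any symmetric subset A ⊆ F with Ā = F \ A and ᾱ = |Ā|/f: f^{−4}·|{(x₁,x₂,x₃,x₄) ∈ F⁴ : x₁−x₂, x₂−x₃, x₃−x₄, x₄−x₁ all in A}| − f^{−4}·|{(x₁,x₂,x₃,x₄) ∈ F⁴ : x₁−x₂, x₂−x₃, x₃−x₄, x₄−x₁ all in Ā}| = 1 − 4ᾱ + 6ᾱ² − 4ᾱ³. -/

import Mathlib

open Finset

open Finset

private def ind {F : Type} [DecidableEq F] (S : Finset F) (x : F) : ℝ :=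
  if x ∈ S then 1 else 0

private lemma ind_sum {F : Type} [Fintype F] [DecidableEq F] (S : Finset F) :
    ∑ y : F, ind S y = S.card := by
  simp [ind, Finset.sum_boole, Finset.filter_mem_eq_inter]

private def cycEquiv (F : Type) [AddCommGroup F] : (F × F × F × F) ≃ (F × F × F × F) where
  toFun q := (q.1 + q.2.1 + q.2.2.1 + q.2.2.2, q.2.1 + q.2.2.1 + q.2.2.2,
    q.2.2.1 + q.2.2.2, q.2.2.2)
  invFun p := (p.1 - p.2.1, p.2.1 - p.2.2.1, p.2.2.1 - p.2.2.2, p.2.2.2)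
  left_inv := by
    rintro ⟨a, b, c, d⟩
    simp only [Prod.mk.injEq]
    refine ⟨by abel, by abel, by abel, trivial⟩
  right_inv := by
    rintro ⟨a, b, c, d⟩
    simp only [Prod.mk.injEq]
    refine ⟨by abel, by abel, by abel, trivial⟩

private lemma card_cycle {F : Type} [AddCommGroup F] [Fintype F] [DecidableEq F]
    (S : Finset F) :
    (Nat.card {p : F × F × F × F //
        p.1 - p.2.1 ∈ S ∧ p.2.1 - p.2.2.1 ∈ S ∧ p.2.2.1 - p.2.2.2 ∈ S ∧
          p.2.2.2 - p.1 ∈ S} : ℝ)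
      = (Fintype.card F : ℝ) * ∑ y1 : F, ∑ y2 : F, ∑ y3 : F,
          ind S y1 * ind S y2 * ind S y3 * ind S (-(y1 + y2 + y3)) := by
  rw [Nat.card_eq_fintype_card, Fintype.card_subtype, ← Finset.sum_boole]
  have step1 : (∑ p : F × F × F × F,
      if p.1 - p.2.1 ∈ S ∧ p.2.1 - p.2.2.1 ∈ S ∧ p.2.2.1 - p.2.2.2 ∈ S ∧
          p.2.2.2 - p.1 ∈ S then (1:ℝ) else 0)
      = ∑ p : F × F × F × F,
        ind S (p.1 - p.2.1) * ind S (p.2.1 - p.2.2.1) * ind S (p.2.2.1 - p.2.2.2) *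
          ind S (p.2.2.2 - p.1) := by
    refine Finset.sum_congr rfl fun p _ => ?_
    by_cases h1 : p.1 - p.2.1 ∈ S <;> by_cases h2 : p.2.1 - p.2.2.1 ∈ S <;>
      by_cases h3 : p.2.2.1 - p.2.2.2 ∈ S <;> by_cases h4 : p.2.2.2 - p.1 ∈ S <;>
      simp [ind, h1, h2, h3, h4]
  rw [step1]
  have step2 : (∑ p : F × F × F × F,
      ind S (p.1 - p.2.1) * ind S (p.2.1 - p.2.2.1) * ind S (p.2.2.1 - p.2.2.2) *
        ind S (p.2.2.2 - p.1))
      = ∑ q : F × F × F × F,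
        ind S q.1 * ind S q.2.1 * ind S q.2.2.1 * ind S (-(q.1 + q.2.1 + q.2.2.1)) := by
    refine (Fintype.sum_equiv (cycEquiv F) _ _ fun q => ?_).symm
    obtain ⟨a, b, c, d⟩ := q
    simp only [cycEquiv, Equiv.coe_fn_mk]
    congr 1
    · congr 1
      · congr 1
        · congr 1; abel
        · congr 1; abel
      · congr 1; abel
    · congr 1; abel
  rw [step2]
  simp only [Fintype.sum_prod_type]
  simp only [Finset.sum_const, card_univ, nsmul_eq_mul, ← Finset.mul_sum]

private lemma ind_shift {F : Type} [AddCommGroup F] [Fintype F] [DecidableEq F]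
    (S : Finset F) (c : F) : ∑ y : F, ind S (-(c + y)) = S.card := by
  rw [← ind_sum S]
  exact Fintype.sum_equiv ((Equiv.addLeft c).trans (Equiv.neg F)) _ _ (fun y => by simp)

private lemma key {F : Type} [AddCommGroup F] [Fintype F] [DecidableEq F]
    (B : Finset F) :
    (∑ y1 : F, ∑ y2 : F, ∑ y3 : F,
        (1 - ind B y1) * (1 - ind B y2) * (1 - ind B y3) * (1 - ind B (-(y1 + y2 + y3))))
      - (∑ y1 : F, ∑ y2 : F, ∑ y3 : F,
        ind B y1 * ind B y2 * ind B y3 * ind B (-(y1 + y2 + y3)))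
      = (Fintype.card F : ℝ) ^ 3 - 4 * (B.card : ℝ) * (Fintype.card F : ℝ) ^ 2
        + 6 * (B.card : ℝ) ^ 2 * (Fintype.card F : ℝ) - 4 * (B.card : ℝ) ^ 3 := by
  have merge : (∑ y1 : F, ∑ y2 : F, ∑ y3 : F,
        (1 - ind B y1) * (1 - ind B y2) * (1 - ind B y3) * (1 - ind B (-(y1 + y2 + y3))))
      - (∑ y1 : F, ∑ y2 : F, ∑ y3 : F,
        ind B y1 * ind B y2 * ind B y3 * ind B (-(y1 + y2 + y3)))
      = ∑ y1 : F, ∑ y2 : F, ∑ y3 : F,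
        (1 - ind B y1 - ind B y2 - ind B y3 - ind B (-(y1 + y2 + y3))
          + ind B y1 * ind B y2 + ind B y1 * ind B y3 + ind B y1 * ind B (-(y1 + y2 + y3))
          + ind B y2 * ind B y3 + ind B y2 * ind B (-(y1 + y2 + y3))
          + ind B y3 * ind B (-(y1 + y2 + y3))
          - ind B y1 * ind B y2 * ind B y3 - ind B y1 * ind B y2 * ind B (-(y1 + y2 + y3))
          - ind B y1 * ind B y3 * ind B (-(y1 + y2 + y3))
          - ind B y2 * ind B y3 * ind B (-(y1 + y2 + y3))) := by
    rw [← Finset.sum_sub_distrib]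
    refine Finset.sum_congr rfl fun y1 _ => ?_
    rw [← Finset.sum_sub_distrib]
    refine Finset.sum_congr rfl fun y2 _ => ?_
    rw [← Finset.sum_sub_distrib]
    refine Finset.sum_congr rfl fun y3 _ => ?_
    ring
  rw [merge]
  simp only [Finset.sum_add_distrib, Finset.sum_sub_distrib]
  have hc : ∀ (c : ℝ), ∑ _y : F, c = (Fintype.card F : ℝ) * c := by
    intro c; simp [Finset.sum_const, card_univ, nsmul_eq_mul]
  have t0 : ∑ _y1 : F, ∑ _y2 : F, ∑ _y3 : F, (1:ℝ)
      = (Fintype.card F : ℝ) ^ 3 := by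
    simp only [hc]; ring
  have t1 : ∑ y1 : F, ∑ _y2 : F, ∑ _y3 : F, ind B y1
      = (B.card : ℝ) * (Fintype.card F : ℝ) ^ 2 := by
    simp only [hc, ← Finset.mul_sum, ind_sum]; ring
  have t2 : ∑ _y1 : F, ∑ y2 : F, ∑ _y3 : F, ind B y2
      = (B.card : ℝ) * (Fintype.card F : ℝ) ^ 2 := by
    simp only [hc, ← Finset.mul_sum, ind_sum]; ring
  have t3 : ∑ _y1 : F, ∑ _y2 : F, ∑ y3 : F, ind B y3
      = (B.card : ℝ) * (Fintype.card F : ℝ) ^ 2 := by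
    simp only [hc, ← Finset.mul_sum, ind_sum]; ring
  have t4 : ∑ y1 : F, ∑ y2 : F, ∑ y3 : F, ind B (-(y1 + y2 + y3))
      = (B.card : ℝ) * (Fintype.card F : ℝ) ^ 2 := by
    simp only [ind_shift, hc]; ring
  have t12 : ∑ y1 : F, ∑ y2 : F, ∑ _y3 : F, ind B y1 * ind B y2
      = (B.card : ℝ) ^ 2 * (Fintype.card F : ℝ) := by
    simp only [hc, ← Finset.mul_sum, ← Finset.sum_mul, ind_sum]; ring
  have t13 : ∑ y1 : F, ∑ _y2 : F, ∑ y3 : F, ind B y1 * ind B y3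
      = (B.card : ℝ) ^ 2 * (Fintype.card F : ℝ) := by
    simp only [hc, ← Finset.mul_sum, ← Finset.sum_mul, ind_sum]; ring
  have t23 : ∑ _y1 : F, ∑ y2 : F, ∑ y3 : F, ind B y2 * ind B y3
      = (B.card : ℝ) ^ 2 * (Fintype.card F : ℝ) := by
    simp only [hc, ← Finset.mul_sum, ← Finset.sum_mul, ind_sum]; ring
  have t14 : ∑ y1 : F, ∑ y2 : F, ∑ y3 : F, ind B y1 * ind B (-(y1 + y2 + y3))
      = (B.card : ℝ) ^ 2 * (Fintype.card F : ℝ) := by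
    have h : ∀ y1 y2 : F, ∑ y3 : F, ind B y1 * ind B (-(y1 + y2 + y3))
        = ind B y1 * (B.card : ℝ) := by
      intro y1 y2; rw [← Finset.mul_sum, ind_shift]
    simp only [h, hc, ← Finset.sum_mul, ← Finset.mul_sum, ind_sum]; ring
  have t24 : ∑ y1 : F, ∑ y2 : F, ∑ y3 : F, ind B y2 * ind B (-(y1 + y2 + y3))
      = (B.card : ℝ) ^ 2 * (Fintype.card F : ℝ) := by
    have h : ∀ y1 y2 : F, ∑ y3 : F, ind B y2 * ind B (-(y1 + y2 + y3))
        = ind B y2 * (B.card : ℝ) := by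
      intro y1 y2; rw [← Finset.mul_sum, ind_shift]
    simp only [h, hc, ← Finset.mul_sum, ← Finset.sum_mul, ind_sum]; ring
  have t34 : ∑ y1 : F, ∑ y2 : F, ∑ y3 : F, ind B y3 * ind B (-(y1 + y2 + y3))
      = (B.card : ℝ) ^ 2 * (Fintype.card F : ℝ) := by
    have h : ∀ y1 : F, ∑ y2 : F, ∑ y3 : F, ind B y3 * ind B (-(y1 + y2 + y3))
        = ∑ y3 : F, ∑ y2 : F, ind B y3 * ind B (-(y1 + y2 + y3)) := fun _ => Finset.sum_comm
    have h2 : ∀ y1 y3 : F, ∑ y2 : F, ind B y3 * ind B (-(y1 + y2 + y3))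
        = ind B y3 * (B.card : ℝ) := by
      intro y1 y3
      rw [← Finset.mul_sum]
      congr 1
      rw [← ind_shift B (y1 + y3)]
      exact Finset.sum_congr rfl fun y2 _ => by congr 1; abel
    simp only [h, h2, hc, ← Finset.sum_mul, ind_sum]; ring
  have t123 : ∑ y1 : F, ∑ y2 : F, ∑ y3 : F, ind B y1 * ind B y2 * ind B y3
      = (B.card : ℝ) ^ 3 := by
    simp only [hc, ← Finset.mul_sum, ← Finset.sum_mul, ind_sum]; ring
  have t124 : ∑ y1 : F, ∑ y2 : F, ∑ y3 : F, ind B y1 * ind B y2 * ind B (-(y1 + y2 + y3))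
      = (B.card : ℝ) ^ 3 := by
    have h : ∀ y1 y2 : F, ∑ y3 : F, ind B y1 * ind B y2 * ind B (-(y1 + y2 + y3))
        = ind B y1 * ind B y2 * (B.card : ℝ) := by
      intro y1 y2; rw [← Finset.mul_sum, ind_shift]
    simp only [h, ← Finset.mul_sum, ← Finset.sum_mul, ind_sum]; ring
  have t134 : ∑ y1 : F, ∑ y2 : F, ∑ y3 : F, ind B y1 * ind B y3 * ind B (-(y1 + y2 + y3))
      = (B.card : ℝ) ^ 3 := by
    have h : ∀ y1 : F, ∑ y2 : F, ∑ y3 : F, ind B y1 * ind B y3 * ind B (-(y1 + y2 + y3))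
        = ∑ y3 : F, ∑ y2 : F, ind B y1 * ind B y3 * ind B (-(y1 + y2 + y3)) :=
      fun _ => Finset.sum_comm
    have h2 : ∀ y1 y3 : F, ∑ y2 : F, ind B y1 * ind B y3 * ind B (-(y1 + y2 + y3))
        = ind B y1 * ind B y3 * (B.card : ℝ) := by
      intro y1 y3
      rw [← Finset.mul_sum]
      congr 1
      rw [← ind_shift B (y1 + y3)]
      exact Finset.sum_congr rfl fun y2 _ => by congr 1; abel
    simp only [h, h2, ← Finset.mul_sum, ← Finset.sum_mul, ind_sum]; ring
  have t234 : ∑ y1 : F, ∑ y2 : F, ∑ y3 : F, ind B y2 * ind B y3 * ind B (-(y1 + y2 + y3))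
      = (B.card : ℝ) ^ 3 := by
    rw [Finset.sum_comm]
    have h : ∀ y2 : F, ∑ y1 : F, ∑ y3 : F, ind B y2 * ind B y3 * ind B (-(y1 + y2 + y3))
        = ∑ y3 : F, ∑ y1 : F, ind B y2 * ind B y3 * ind B (-(y1 + y2 + y3)) :=
      fun _ => Finset.sum_comm
    have h2 : ∀ y2 y3 : F, ∑ y1 : F, ind B y2 * ind B y3 * ind B (-(y1 + y2 + y3))
        = ind B y2 * ind B y3 * (B.card : ℝ) := by
      intro y2 y3
      rw [← Finset.mul_sum]
      congr 1
      rw [← ind_shift B (y2 + y3)]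
      exact Finset.sum_congr rfl fun y1 _ => by congr 1; abel
    simp only [h, h2, ← Finset.mul_sum, ← Finset.sum_mul, ind_sum]; ring
  rw [t0, t1, t2, t3, t4, t12, t13, t14, t23, t24, t34, t123, t124, t134, t234]
  ring


/-- Four-cycle reciprocity: for a finite abelian group `F`, symmetric
`A ⊆ F`, `Ā = F \ A` and `ᾱ = |Ā|/f`:
`f⁻⁴|{(x₁,x₂,x₃,x₄) : cyclic differences in A}| - f⁻⁴|{… in Ā}| = 1 - 4ᾱ + 6ᾱ² - 4ᾱ³`. -/
theorem four_cycle_reciprocity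
    (F : Type) [AddCommGroup F] [Fintype F] [DecidableEq F]
    (A : Finset F) (hA : ∀ a ∈ A, -a ∈ A) :
    (Nat.card {p : F × F × F × F //
          p.1 - p.2.1 ∈ A ∧ p.2.1 - p.2.2.1 ∈ A ∧ p.2.2.1 - p.2.2.2 ∈ A ∧
            p.2.2.2 - p.1 ∈ A} : ℝ) / (Fintype.card F : ℝ) ^ 4 -
      (Nat.card {p : F × F × F × F //
          p.1 - p.2.1 ∈ Aᶜ ∧ p.2.1 - p.2.2.1 ∈ Aᶜ ∧ p.2.2.1 - p.2.2.2 ∈ Aᶜ ∧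
            p.2.2.2 - p.1 ∈ Aᶜ} : ℝ) / (Fintype.card F : ℝ) ^ 4
      = 1 - 4 * ((Aᶜ.card : ℝ) / (Fintype.card F : ℝ))
          + 6 * ((Aᶜ.card : ℝ) / (Fintype.card F : ℝ)) ^ 2
          - 4 * ((Aᶜ.card : ℝ) / (Fintype.card F : ℝ)) ^ 3 := by
  have hf0 : (Fintype.card F : ℝ) ≠ 0 := Nat.cast_ne_zero.2 Fintype.card_ne_zero
  rw [card_cycle A, card_cycle Aᶜ]
  have hAc : ∀ x : F, ind A x = 1 - ind Aᶜ x := by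
    intro x; by_cases h : x ∈ A <;> simp [ind, h]
  simp only [hAc]
  have expand : ∀ X Y : ℝ, (Fintype.card F : ℝ) * X / (Fintype.card F : ℝ) ^ 4
      - (Fintype.card F : ℝ) * Y / (Fintype.card F : ℝ) ^ 4
      = (X - Y) / (Fintype.card F : ℝ) ^ 3 := by
    intro X Y; field_simp
  rw [expand, key Aᶜ]
  field_simp
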